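/- If u is C² convex with det D²u(x) = f(x)/g(∇u(x)) on the unit square Q, and u⋆ denotes its partial Legendre transform in the e₁-direction, then u⋆ satisfies the linear uniformly elliptic equation f(∂₁u⋆(p,x₂), x₂)·∂₁₁u⋆(p,x₂) + g(p, −∂₂u⋆(p,x₂))·∂₂₂u⋆(p,x₂) = 0 at interior points. -/

import Mathlib

noncomputable def pt (a b : ℝ) : EuclideanSpace ℝ (Fin 2) :=
  (WithLp.equiv 2 (Fin 2 → ℝ)).symm ![a, b]

def Qbar : Set (EuclideanSpace ℝ (Fin 2)) :=
  {x | x 0 ∈ Set.Icc (0 : ℝ) 1 ∧ x 1 ∈ Set.Icc (0 : ℝ) 1}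

/-- mixed second partial derivative `∂ᵥ∂_w u` -/
noncomputable def D2 (u : EuclideanSpace ℝ (Fin 2) → ℝ)
    (x v w : EuclideanSpace ℝ (Fin 2)) : ℝ :=
  fderiv ℝ (fun y => fderiv ℝ u y w) x v

/-- partial Legendre transform of `u` in the `e₁`-direction -/
noncomputable def pLegendre (u : EuclideanSpace ℝ (Fin 2) → ℝ)
    (q : EuclideanSpace ℝ (Fin 2)) : ℝ :=
  sSup ((fun x₁ => q 0 * x₁ - u (pt x₁ (q 1))) '' Set.Icc (0 : ℝ) 1)

set_option maxHeartbeats 2000000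

lemma pt_apply0 (a b : ℝ) : pt a b 0 = a := rfl
lemma pt_apply1 (a b : ℝ) : pt a b 1 = b := rfl

lemma pt_eta (x : EuclideanSpace ℝ (Fin 2)) : pt (x 0) (x 1) = x := by
  ext i; fin_cases i <;> rfl

lemma pt_smul_add (a b : ℝ) : pt a b = a • pt 1 0 + b • pt 0 1 := by
  ext i; fin_cases i <;> simp [pt_apply0, pt_apply1]

lemma pt_ext {a b c d : ℝ} (h1 : a = c) (h2 : b = d) : pt a b = pt c d := by rw [h1, h2]

lemma norm_pt10 : ‖pt 1 0‖ = 1 := by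
  simp [EuclideanSpace.norm_eq, pt, Fin.sum_univ_two]

lemma norm_pt01 : ‖pt 0 1‖ = 1 := by
  simp [EuclideanSpace.norm_eq, pt, Fin.sum_univ_two]

noncomputable def shearEquiv (a b : ℝ) (ha : a ≠ 0) :
    EuclideanSpace ℝ (Fin 2) ≃L[ℝ] EuclideanSpace ℝ (Fin 2) :=
  LinearEquiv.toContinuousLinearEquiv
  { toFun := fun v => pt (a * v 0 + b * v 1) (v 1)
    invFun := fun v => pt ((v 0 - b * v 1) / a) (v 1)
    map_add' := by
      intro v w; ext i; fin_cases i <;>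
        simp [pt_apply0, pt_apply1, PiLp.add_apply] <;> ring
    map_smul' := by
      intro c v; ext i; fin_cases i <;>
        simp [pt_apply0, pt_apply1, PiLp.smul_apply, smul_eq_mul] <;> ring
    left_inv := by
      intro v
      have : (a * v 0 + b * v 1 - b * v 1) / a = v 0 := by field_simp; ring
      simp only [pt_apply0, pt_apply1, this]
      exact pt_eta v
    right_inv := by
      intro v
      have : a * ((v 0 - b * v 1) / a) + b * v 1 = v 0 := by field_simp; ring
      simp only [pt_apply0, pt_apply1, this]
      exact pt_eta v }

lemma shearEquiv_apply (a b : ℝ) (ha : a ≠ 0) (v : EuclideanSpace ℝ (Fin 2)) :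
    shearEquiv a b ha v = pt (a * v 0 + b * v 1) (v 1) := rfl

lemma shearEquiv_symm_apply (a b : ℝ) (ha : a ≠ 0) (v : EuclideanSpace ℝ (Fin 2)) :
    (shearEquiv a b ha).symm v = pt ((v 0 - b * v 1) / a) (v 1) := rfl

lemma euclid_single0 : (EuclideanSpace.single 0 (1:ℝ) : EuclideanSpace ℝ (Fin 2)) = pt 1 0 := by
  ext i; fin_cases i <;> simp [pt_apply0, pt_apply1]

lemma euclid_single1 : (EuclideanSpace.single 1 (1:ℝ) : EuclideanSpace ℝ (Fin 2)) = pt 0 1 := by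
  ext i; fin_cases i <;> simp [pt_apply0, pt_apply1]

lemma gradient_eq_pt (u : EuclideanSpace ℝ (Fin 2) → ℝ) (x : EuclideanSpace ℝ (Fin 2)) :
    gradient u x = pt (fderiv ℝ u x (pt 1 0)) (fderiv ℝ u x (pt 0 1)) := by
  have key : ∀ v, (inner ℝ (gradient u x) v : ℝ) = fderiv ℝ u x v := by
    intro v
    show (inner ℝ ((InnerProductSpace.toDual ℝ _).symm (fderiv ℝ u x)) v : ℝ) = _
    exact InnerProductSpace.toDual_symm_apply
  ext i
  fin_cases i
  · have := key (EuclideanSpace.single 0 (1:ℝ))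
    rw [euclid_single0] at this
    rw [← this, ← euclid_single0, EuclideanSpace.inner_single_right]; simp [pt_apply0]
  · have := key (EuclideanSpace.single 1 (1:ℝ))
    rw [euclid_single1] at this
    rw [← this, ← euclid_single1, EuclideanSpace.inner_single_right]; simp [pt_apply1]

theorem stmt_13 (u f g : EuclideanSpace ℝ (Fin 2) → ℝ) (hu : ContDiff ℝ 2 u) (C : ℝ) (hC : 0 < C)
    (hconv : ∀ x ∈ Qbar, ∀ v : EuclideanSpace ℝ (Fin 2),
      (1 / C) * ‖v‖ ^ 2 ≤ D2 u x v v ∧ D2 u x v v ≤ C * ‖v‖ ^ 2)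
    (hfg : ContinuousOn f Qbar ∧ ContinuousOn g Qbar ∧
      (∀ x ∈ Qbar, 0 < f x) ∧ ∀ y ∈ Qbar, 0 < g y)
    (hMA : ∀ x ∈ Qbar,
      D2 u x (pt 1 0) (pt 1 0) * D2 u x (pt 0 1) (pt 0 1)
        - D2 u x (pt 1 0) (pt 0 1) * D2 u x (pt 0 1) (pt 1 0) = f x / g (gradient u x)) :
    ∀ p x₂ ξ : ℝ, x₂ ∈ Set.Ioo (0 : ℝ) 1 → ξ ∈ Set.Ioo (0 : ℝ) 1 →
      (∀ t ∈ Set.Icc (0 : ℝ) 1, p * t - u (pt t x₂) ≤ p * ξ - u (pt ξ x₂)) →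
      fderiv ℝ u (pt ξ x₂) (pt 1 0) = p →
      f (pt (fderiv ℝ (pLegendre u) (pt p x₂) (pt 1 0)) x₂)
          * D2 (pLegendre u) (pt p x₂) (pt 1 0) (pt 1 0)
        + g (pt p (-(fderiv ℝ (pLegendre u) (pt p x₂) (pt 0 1))))
          * D2 (pLegendre u) (pt p x₂) (pt 0 1) (pt 0 1) = 0 := by
  obtain ⟨hfc, hgc, hfpos, hgpos⟩ := hfg
  intro p x₂ ξ hx₂ hξ hmax hcrit
  -- notation
  set E1 : EuclideanSpace ℝ (Fin 2) := pt 1 0 with hE1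
  set E2 : EuclideanSpace ℝ (Fin 2) := pt 0 1 with hE2
  set xb : EuclideanSpace ℝ (Fin 2) := pt ξ x₂ with hxb
  set qb : EuclideanSpace ℝ (Fin 2) := pt p x₂ with hqb
  have hE1a : E1 0 = 1 ∧ E1 1 = 0 := ⟨rfl, rfl⟩
  have hE2a : E2 0 = 0 ∧ E2 1 = 1 := ⟨rfl, rfl⟩
  have hudiff : Differentiable ℝ u := hu.differentiable (by norm_num)
  have hfd : ContDiff ℝ 1 (fderiv ℝ u) := hu.fderiv_right (by norm_num)
  have hG1 : ContDiff ℝ 1 (fun y => fderiv ℝ u y E1) := hfd.clm_apply contDiff_const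
  have hG2 : ContDiff ℝ 1 (fun y => fderiv ℝ u y E2) := hfd.clm_apply contDiff_const
  have hG1d : ∀ y, DifferentiableAt ℝ (fun y => fderiv ℝ u y E1) y :=
    fun y => (hG1.differentiable one_ne_zero) y
  have hG2d : ∀ y, DifferentiableAt ℝ (fun y => fderiv ℝ u y E2) y :=
    fun y => (hG2.differentiable one_ne_zero) y
  have hfderivG1 : ∀ y v, fderiv ℝ (fun y => fderiv ℝ u y E1) y v = D2 u y v E1 := fun y v => rfl
  have hfderivG2 : ∀ y v, fderiv ℝ (fun y => fderiv ℝ u y E2) y v = D2 u y v E2 := fun y v => rfl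
  have hQxb : xb ∈ Qbar := by
    constructor
    · rw [hxb, pt_apply0]; exact ⟨le_of_lt hξ.1, le_of_lt hξ.2⟩
    · rw [hxb, pt_apply1]; exact ⟨le_of_lt hx₂.1, le_of_lt hx₂.2⟩
  -- expansion of fderiv u in coordinates
  have hfu_exp : ∀ y : EuclideanSpace ℝ (Fin 2), ∀ s t : ℝ,
      fderiv ℝ u y (pt s t) = s * fderiv ℝ u y E1 + t * fderiv ℝ u y E2 := by
    intro y s t
    rw [pt_smul_add, map_add, map_smul, map_smul]
    simp [smul_eq_mul]
    rfl
  -- linearity of D2 in the direction argument v (first slot)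
  have hD2v : ∀ w, ∀ s t : ℝ, ∀ y, D2 u y (pt s t) w = s * D2 u y E1 w + t * D2 u y E2 w := by
    intro w s t y
    show fderiv ℝ (fun z => fderiv ℝ u z w) y (pt s t) = _
    rw [pt_smul_add, map_add, map_smul, map_smul]
    simp [smul_eq_mul, D2]
    rfl
  -- linearity of D2 in the w argument
  have hD2w : ∀ y, ∀ v, ∀ s t : ℝ,
      D2 u y v (pt s t) = s * D2 u y v E1 + t * D2 u y v E2 := by
    intro y v s t
    have hfun : (fun z => fderiv ℝ u z (pt s t))
        = fun z => s * fderiv ℝ u z E1 + t * fderiv ℝ u z E2 := funext fun z => hfu_exp z s t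
    show fderiv ℝ (fun z => fderiv ℝ u z (pt s t)) y v = _
    rw [hfun, fderiv_fun_add ((hG1d y).const_mul s) ((hG2d y).const_mul t)]
    rw [fderiv_const_mul (hG1d y) s, fderiv_const_mul (hG2d y) t]
    simp [D2, smul_eq_mul]
  set a : ℝ := D2 u xb E1 E1 with ha'
  set b : ℝ := D2 u xb E2 E1 with hb'
  set c : ℝ := D2 u xb E1 E2 with hc'
  set d : ℝ := D2 u xb E2 E2 with hd'
  have hCpos : (0:ℝ) < 1 / C := by positivity
  have hD2pos : ∀ x ∈ Qbar, 0 < D2 u x E1 E1 := by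
    intro x hx
    have := (hconv x hx E1).1
    rw [hE1, norm_pt10] at this
    nlinarith
  have hapos : 0 < a := hD2pos xb hQxb
  -- determinant is positive
  have hdet : 0 < a * d - c * b := by
    set s : ℝ := -(b + c) / (2 * a) with hs
    have hQ := (hconv xb hQxb (pt s 1)).1
    rw [hD2w xb (pt s 1) s 1, hD2v E1 s 1 xb, hD2v E2 s 1 xb] at hQ
    have hnorm : ‖pt s 1‖ ^ 2 = s ^ 2 + 1 := by
      rw [EuclideanSpace.norm_eq, Real.sq_sqrt (by positivity)]
      simp [Fin.sum_univ_two, pt_apply0, pt_apply1, sq_abs]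
    rw [hnorm] at hQ
    have h1 : 0 < s * (s * a + 1 * b) + 1 * (s * c + 1 * d) :=
      lt_of_lt_of_le (by positivity) hQ
    have h2 : s * (s * a + 1 * b) + 1 * (s * c + 1 * d) = d - (b + c) ^ 2 / (4 * a) := by
      rw [hs]; field_simp; ring
    rw [h2, sub_pos] at h1
    have h3 : (b + c) ^ 2 < d * (4 * a) := (div_lt_iff₀ (by positivity)).1 h1
    nlinarith [sq_nonneg (b - c)]
  -- the map Φ and the inverse function theorem
  set Φ : EuclideanSpace ℝ (Fin 2) → EuclideanSpace ℝ (Fin 2) :=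
    fun q => (fderiv ℝ u q E1) • E1 + (q 1) • E2 with hΦdef
  have hΦapp : ∀ q, Φ q = pt (fderiv ℝ u q E1) (q 1) := by
    intro q; rw [hΦdef]; rw [pt_smul_add (fderiv ℝ u q E1) (q 1)]
  have hΦcd : ContDiff ℝ 1 Φ := by
    apply ContDiff.add
    · exact hG1.smul contDiff_const
    · exact (((EuclideanSpace.proj 1 : EuclideanSpace ℝ (Fin 2) →L[ℝ] ℝ)).contDiff).smul
        contDiff_const
  set A : EuclideanSpace ℝ (Fin 2) ≃L[ℝ] EuclideanSpace ℝ (Fin 2) :=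
    shearEquiv a b (ne_of_gt hapos) with hA
  have hΦA : HasFDerivAt Φ (↑A : EuclideanSpace ℝ (Fin 2) →L[ℝ] EuclideanSpace ℝ (Fin 2)) xb := by
    have h1 : HasFDerivAt (fun q => fderiv ℝ u q E1)
        (fderiv ℝ (fun y => fderiv ℝ u y E1) xb) xb := (hG1d xb).hasFDerivAt
    have h2 := h1.smul_const E1
    have h3 : HasFDerivAt (fun q : EuclideanSpace ℝ (Fin 2) => q 1)
        (EuclideanSpace.proj 1 : EuclideanSpace ℝ (Fin 2) →L[ℝ] ℝ) xb :=
      (EuclideanSpace.proj 1 : EuclideanSpace ℝ (Fin 2) →L[ℝ] ℝ).hasFDerivAt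
    have h4 := h3.smul_const E2
    have h5 := h2.add h4
    refine h5.congr_fderiv (Eq.symm ?_)
    refine ContinuousLinearMap.ext fun v => ?_
    have hv : fderiv ℝ (fun y => fderiv ℝ u y E1) xb v = a * v 0 + b * v 1 := by
      conv_lhs => rw [← pt_eta v, pt_smul_add (v 0) (v 1)]
      rw [map_add, map_smul, map_smul]
      simp only [smul_eq_mul, hfderivG1]
      rw [← ha', ← hb']; ring
    show A v = _
    rw [hA, shearEquiv_apply]
    rw [pt_smul_add]
    simp only [ContinuousLinearMap.add_apply, ContinuousLinearMap.smulRight_apply, hv,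
      ← hE1, ← hE2]
    rfl
  set P : OpenPartialHomeomorph (EuclideanSpace ℝ (Fin 2)) (EuclideanSpace ℝ (Fin 2)) :=
    hΦcd.contDiffAt.toOpenPartialHomeomorph Φ hΦA one_ne_zero with hP
  have hPcoe : ⇑P = Φ := hΦcd.contDiffAt.toOpenPartialHomeomorph_coe hΦA one_ne_zero
  have hΦxb : Φ xb = qb := by
    rw [hΦapp]; rw [hqb]
    exact pt_ext hcrit (by rw [hxb, pt_apply1])
  have hsrc : xb ∈ P.source := hΦcd.contDiffAt.mem_toOpenPartialHomeomorph_source hΦA one_ne_zero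
  have htgt : qb ∈ P.target := by
    rw [← hΦxb]
    exact hΦcd.contDiffAt.image_mem_toOpenPartialHomeomorph_target hΦA one_ne_zero
  set Y : EuclideanSpace ℝ (Fin 2) → EuclideanSpace ℝ (Fin 2) := ⇑P.symm with hY
  have hYqb : Y qb = xb := by
    have := P.left_inv hsrc
    rw [hPcoe, hΦxb] at this
    exact this
  have hrinv : ∀ q ∈ P.target, Φ (Y q) = q := by
    intro q hq
    have := P.right_inv hq
    rwa [hPcoe] at this
  have hYcdAt : ContDiffAt ℝ 1 Y qb := by
    apply P.contDiffAt_symm htgt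
    · rw [show P.symm qb = xb from hYqb]; exact hΦA
    · rw [hPcoe, show P.symm qb = xb from hYqb]; exact hΦcd.contDiffAt
  have hYder : HasFDerivAt Y
      (↑A.symm : EuclideanSpace ℝ (Fin 2) →L[ℝ] EuclideanSpace ℝ (Fin 2)) qb := by
    apply HasFDerivAt.of_local_left_inverse hYcdAt.continuousAt
    · rw [hYqb]; exact hΦA
    · exact (P.eventually_right_inverse htgt).mono fun q hq => by rw [← hPcoe]; exact hq
  -- coordinates of Φ
  have hΦ0 : ∀ y, Φ y 0 = fderiv ℝ u y E1 := by
    intro y; rw [hΦapp, pt_apply0]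
  have hΦ1 : ∀ y, Φ y 1 = y 1 := by
    intro y; rw [hΦapp, pt_apply1]
  have hY1 : ∀ q ∈ P.target, Y q 1 = q 1 := by
    intro q hq
    have := congrArg (fun z : EuclideanSpace ℝ (Fin 2) => z 1) (hrinv q hq)
    simpa [hΦ1] using this
  have hY0 : ∀ q ∈ P.target, fderiv ℝ u (Y q) E1 = q 0 := by
    intro q hq
    have := congrArg (fun z : EuclideanSpace ℝ (Fin 2) => z 0) (hrinv q hq)
    simpa [hΦ0] using this
  -- neighborhood where Y is nice
  obtain ⟨W, hWnhds, hYW⟩ := hYcdAt.contDiffOn le_rfl (by simp)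
  set V₁ : Set (EuclideanSpace ℝ (Fin 2)) :=
    (interior W ∩ P.target) ∩ ((fun q : EuclideanSpace ℝ (Fin 2) => q 1) ⁻¹' Set.Ioo 0 1)
    with hV₁
  have hV₁open : IsOpen V₁ := by
    apply IsOpen.inter (IsOpen.inter isOpen_interior P.open_target)
    exact (EuclideanSpace.proj 1 :
      EuclideanSpace ℝ (Fin 2) →L[ℝ] ℝ).continuous.isOpen_preimage _ isOpen_Ioo
  have hYcontV₁ : ContinuousOn (fun q => Y q 0) V₁ := by
    apply ContinuousOn.comp (t := Set.univ)
      (EuclideanSpace.proj 0 :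
        EuclideanSpace ℝ (Fin 2) →L[ℝ] ℝ).continuous.continuousOn
    · exact (hYW.continuousOn.mono (fun q hq => interior_subset hq.1.1))
    · exact fun q hq => Set.mem_univ _
  set V : Set (EuclideanSpace ℝ (Fin 2)) :=
    V₁ ∩ ((fun q => Y q 0) ⁻¹' Set.Ioo 0 1) with hV
  have hVopen : IsOpen V := hYcontV₁.isOpen_inter_preimage hV₁open isOpen_Ioo
  have hqbV : qb ∈ V := by
    refine ⟨⟨⟨?_, htgt⟩, ?_⟩, ?_⟩
    · exact mem_interior_iff_mem_nhds.2 hWnhds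
    · show qb 1 ∈ Set.Ioo (0:ℝ) 1
      rw [hqb, pt_apply1]; exact hx₂
    · show Y qb 0 ∈ Set.Ioo (0:ℝ) 1
      rw [hYqb, hxb, pt_apply0]; exact hξ
  have hVnhds : V ∈ nhds qb := hVopen.mem_nhds hqbV
  -- local formula for the Legendre transform
  have hloc : ∀ q ∈ V, pLegendre u q = q 0 * Y q 0 - u (Y q) := by
    intro q hq
    obtain ⟨⟨⟨hqW, hqT⟩, hq1⟩, hq0⟩ := hq
    rw [Set.mem_preimage] at hq1 hq0
    have hYq1 : Y q 1 = q 1 := hY1 q hqT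
    have hYpt : pt (Y q 0) (q 1) = Y q := by rw [← hYq1]; exact pt_eta (Y q)
    have hcq : fderiv ℝ u (Y q) E1 = q 0 := hY0 q hqT
    set φ : ℝ → ℝ := fun t => q 0 * t - u (pt t (q 1)) with hφdef
    have hcurveder : ∀ t : ℝ, HasDerivAt (fun t : ℝ => pt t (q 1)) E1 t := by
      intro t
      have h1 : HasDerivAt (fun t : ℝ => t • E1 + (q 1) • E2) E1 t := by
        simpa using ((hasDerivAt_id t).smul_const E1).add_const ((q 1) • E2)
      have : (fun t : ℝ => pt t (q 1)) = fun t : ℝ => t • E1 + (q 1) • E2 :=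
        funext fun t => pt_smul_add t (q 1)
      rw [this]; exact h1
    have hcurvecont : Continuous (fun t : ℝ => pt t (q 1)) := by
      have : (fun t : ℝ => pt t (q 1)) = fun t : ℝ => t • E1 + (q 1) • E2 :=
        funext fun t => pt_smul_add t (q 1)
      rw [this]
      exact (continuous_id.smul continuous_const).add continuous_const
    have hucomp : ∀ t : ℝ, HasDerivAt (fun t : ℝ => u (pt t (q 1)))
        (fderiv ℝ u (pt t (q 1)) E1) t := by
      intro t
      exact (hudiff (pt t (q 1))).hasFDerivAt.comp_hasDerivAt t (hcurveder t)
    have hφd : ∀ t : ℝ, HasDerivAt φ (q 0 - fderiv ℝ u (pt t (q 1)) E1) t := by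
      intro t
      have h1 : HasDerivAt (fun t : ℝ => q 0 * t) (q 0) t := by
        simpa using (hasDerivAt_id t).const_mul (q 0)
      exact h1.sub (hucomp t)
    have hφcont : Continuous φ := by
      apply Continuous.sub
      · exact continuous_const.mul continuous_id
      · exact hu.continuous.comp hcurvecont
    have hmemQ : ∀ t ∈ Set.Icc (0:ℝ) 1, pt t (q 1) ∈ Qbar := by
      intro t ht
      constructor
      · rw [pt_apply0]; exact ht
      · rw [pt_apply1]; exact ⟨le_of_lt hq1.1, le_of_lt hq1.2⟩
    have hψmono : StrictMonoOn (fun t : ℝ => fderiv ℝ u (pt t (q 1)) E1) (Set.Icc 0 1) := by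
      apply strictMonoOn_of_deriv_pos (convex_Icc 0 1)
      · exact (hG1.continuous.comp hcurvecont).continuousOn
      · intro t ht
        rw [interior_Icc] at ht
        have hd : HasDerivAt (fun t : ℝ => fderiv ℝ u (pt t (q 1)) E1)
            (D2 u (pt t (q 1)) E1 E1) t := by
          have := (hG1d (pt t (q 1))).hasFDerivAt.comp_hasDerivAt t (hcurveder t)
          rwa [hfderivG1] at this
        rw [hd.deriv]
        exact hD2pos _ (hmemQ t ⟨le_of_lt ht.1, le_of_lt ht.2⟩)
    have ht0 : Y q 0 ∈ Set.Icc (0:ℝ) 1 := ⟨le_of_lt hq0.1, le_of_lt hq0.2⟩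
    have hψY : fderiv ℝ u (pt (Y q 0) (q 1)) E1 = q 0 := by rw [hYpt]; exact hcq
    have hmem : ∀ t ∈ Set.Icc (0:ℝ) 1, φ t ≤ φ (Y q 0) := by
      intro t ht
      rcases le_or_gt t (Y q 0) with hle | hlt
      · have hmono : StrictMonoOn φ (Set.Icc 0 (Y q 0)) := by
          apply strictMonoOn_of_deriv_pos (convex_Icc _ _)
          · exact hφcont.continuousOn
          · intro s hs
            rw [interior_Icc] at hs
            rw [(hφd s).deriv]
            have h1 : fderiv ℝ u (pt s (q 1)) E1 < q 0 := by
              rw [← hψY]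
              exact hψmono ⟨le_of_lt hs.1, le_trans (le_of_lt hs.2) ht0.2⟩ ht0 hs.2
            linarith
        exact hmono.monotoneOn ⟨ht.1, hle⟩ ⟨ht0.1, le_refl _⟩ hle
      · have hanti : StrictAntiOn φ (Set.Icc (Y q 0) 1) := by
          apply strictAntiOn_of_deriv_neg (convex_Icc _ _)
          · exact hφcont.continuousOn
          · intro s hs
            rw [interior_Icc] at hs
            rw [(hφd s).deriv]
            have h1 : q 0 < fderiv ℝ u (pt s (q 1)) E1 := by
              rw [← hψY]
              exact hψmono ht0 ⟨le_trans ht0.1 (le_of_lt hs.1), le_of_lt hs.2⟩ hs.1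
            linarith
        exact le_of_lt (hanti ⟨le_refl _, le_trans (le_of_lt hlt) ht.2⟩ ⟨le_of_lt hlt, ht.2⟩ hlt)
    have hgr : IsGreatest ((fun x₁ => q 0 * x₁ - u (pt x₁ (q 1))) '' Set.Icc (0:ℝ) 1)
        (φ (Y q 0)) := by
      constructor
      · exact ⟨Y q 0, ht0, rfl⟩
      · rintro y ⟨t, ht, rfl⟩
        exact hmem t ht
    show sSup ((fun x₁ => q 0 * x₁ - u (pt x₁ (q 1))) '' Set.Icc (0:ℝ) 1) = _
    rw [hgr.csSup_eq]
    rw [hφdef]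
    simp only
    rw [hYpt]
  -- first derivative formulas on V
  set π0 : EuclideanSpace ℝ (Fin 2) →L[ℝ] ℝ := EuclideanSpace.proj 0 with hπ0
  set π1 : EuclideanSpace ℝ (Fin 2) →L[ℝ] ℝ := EuclideanSpace.proj 1 with hπ1
  have hπ0app : ∀ v : EuclideanSpace ℝ (Fin 2), π0 v = v 0 := fun v => rfl
  have hπ1app : ∀ v : EuclideanSpace ℝ (Fin 2), π1 v = v 1 := fun v => rfl
  have hkey : ∀ q ∈ V, fderiv ℝ (pLegendre u) q E1 = Y q 0 ∧
      fderiv ℝ (pLegendre u) q E2 = -(fderiv ℝ u (Y q) E2) := by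
    intro q hq
    obtain ⟨⟨⟨hqW, hqT⟩, hq1⟩, hq0⟩ := hq
    have hWq : W ∈ nhds q := mem_nhds_iff.2 ⟨interior W, interior_subset, isOpen_interior, hqW⟩
    have hYdq : DifferentiableAt ℝ Y q := (hYW.contDiffAt hWq).differentiableAt one_ne_zero
    set DY := fderiv ℝ Y q with hDY
    have hDY1 : ∀ v, DY v 1 = v 1 := by
      intro v
      have hev : (fun q' => Y q' 1) =ᶠ[nhds q] (fun q' : EuclideanSpace ℝ (Fin 2) => q' 1) :=
        Filter.eventuallyEq_of_mem (P.open_target.mem_nhds hqT) (fun q' hq' => hY1 q' hq')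
      have h1 : HasFDerivAt (fun q' => Y q' 1) (π1.comp DY) q :=
        π1.hasFDerivAt.comp q hYdq.hasFDerivAt
      have h2 : HasFDerivAt (fun q' : EuclideanSpace ℝ (Fin 2) => q' 1) π1 q := π1.hasFDerivAt
      have h3 : π1.comp DY = π1 := by
        rw [← h1.fderiv, ← h2.fderiv]
        exact hev.fderiv_eq
      have := congrArg (fun L : EuclideanSpace ℝ (Fin 2) →L[ℝ] ℝ => L v) h3
      simpa [hπ1app] using this
    have hA2 : HasFDerivAt (fun q' => Y q' 0) (π0.comp DY) q :=
      π0.hasFDerivAt.comp q hYdq.hasFDerivAt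
    have hA1 : HasFDerivAt (fun q' : EuclideanSpace ℝ (Fin 2) => q' 0) π0 q := π0.hasFDerivAt
    have hAm := hA1.mul' hA2
    have hB : HasFDerivAt (fun q' => u (Y q')) ((fderiv ℝ u (Y q)).comp DY) q :=
      (hudiff (Y q)).hasFDerivAt.comp q hYdq.hasFDerivAt
    have hhq : HasFDerivAt (fun q' => q' 0 * Y q' 0 - u (Y q'))
        (q 0 • (π0.comp DY) + π0.smulRight (Y q 0) - (fderiv ℝ u (Y q)).comp DY) q := hAm.sub hB
    have hev2 : pLegendre u =ᶠ[nhds q] (fun q' => q' 0 * Y q' 0 - u (Y q')) :=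
      Filter.eventuallyEq_of_mem (hVopen.mem_nhds ⟨⟨⟨hqW, hqT⟩, hq1⟩, hq0⟩) hloc
    have hfder : fderiv ℝ (pLegendre u) q
        = q 0 • (π0.comp DY) + π0.smulRight (Y q 0) - (fderiv ℝ u (Y q)).comp DY := by
      rw [hev2.fderiv_eq]; exact hhq.fderiv
    have hexp : ∀ v, fderiv ℝ u (Y q) (DY v)
        = q 0 * (DY v 0) + fderiv ℝ u (Y q) E2 * (v 1) := by
      intro v
      conv_lhs => rw [← pt_eta (DY v)]
      rw [hfu_exp (Y q) (DY v 0) (DY v 1), hY0 q hqT, hDY1 v]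
      ring
    constructor
    · rw [hfder]
      simp only [ContinuousLinearMap.sub_apply, ContinuousLinearMap.add_apply,
        ContinuousLinearMap.smul_apply, ContinuousLinearMap.comp_apply, smul_eq_mul,
        ContinuousLinearMap.smulRight_apply, hπ0app, hexp E1]
      rw [hE1a.1, hE1a.2]; ring
    · rw [hfder]
      simp only [ContinuousLinearMap.sub_apply, ContinuousLinearMap.add_apply,
        ContinuousLinearMap.smul_apply, ContinuousLinearMap.comp_apply, smul_eq_mul,
        ContinuousLinearMap.smulRight_apply, hπ0app, hexp E2]
      rw [hE2a.1, hE2a.2]; ring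
  have hkey1 : (fun q => fderiv ℝ (pLegendre u) q E1) =ᶠ[nhds qb] (fun q => Y q 0) :=
    Filter.eventuallyEq_of_mem hVnhds (fun q hq => (hkey q hq).1)
  have hkey2 : (fun q => fderiv ℝ (pLegendre u) q E2)
      =ᶠ[nhds qb] (fun q => -(fderiv ℝ u (Y q) E2)) :=
    Filter.eventuallyEq_of_mem hVnhds (fun q hq => (hkey q hq).2)
  have hfd1 : fderiv ℝ (pLegendre u) qb E1 = ξ := by
    have h := hkey1.eq_of_nhds
    simp only at h
    rw [h, hYqb, hxb, pt_apply0]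
  have hfd2 : fderiv ℝ (pLegendre u) qb E2 = -(fderiv ℝ u xb E2) := by
    have h := hkey2.eq_of_nhds
    rw [h, hYqb]
  have hAsymm1 : A.symm E1 = pt (1 / a) 0 := by
    rw [hA, shearEquiv_symm_apply]
    exact pt_ext (by rw [hE1a.1, hE1a.2]; ring) hE1a.2
  have hAsymm2 : A.symm E2 = pt (-b / a) 1 := by
    rw [hA, shearEquiv_symm_apply]
    exact pt_ext (by rw [hE2a.1, hE2a.2]; ring) hE2a.2
  have hd11 : D2 (pLegendre u) qb E1 E1 = 1 / a := by
    have h2 : HasFDerivAt (fun q => Y q 0)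
        (π0.comp (↑A.symm : EuclideanSpace ℝ (Fin 2) →L[ℝ] EuclideanSpace ℝ (Fin 2))) qb :=
      π0.hasFDerivAt.comp qb hYder
    have h3 : fderiv ℝ (fun q => fderiv ℝ (pLegendre u) q E1) qb
        = π0.comp (↑A.symm : EuclideanSpace ℝ (Fin 2) →L[ℝ] EuclideanSpace ℝ (Fin 2)) := by
      rw [hkey1.fderiv_eq]; exact h2.fderiv
    show fderiv ℝ (fun q => fderiv ℝ (pLegendre u) q E1) qb E1 = 1 / a
    rw [h3]
    simp only [ContinuousLinearMap.comp_apply, ContinuousLinearEquiv.coe_coe, hπ0app]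
    rw [hAsymm1, pt_apply0]
  have hd22 : D2 (pLegendre u) qb E2 E2 = b * c / a - d := by
    have hG2fd : HasFDerivAt (fun y => fderiv ℝ u y E2)
        (fderiv ℝ (fun y => fderiv ℝ u y E2) xb) (Y qb) := by
      rw [hYqb]; exact (hG2d xb).hasFDerivAt
    have hcomp : HasFDerivAt (fun q => fderiv ℝ u (Y q) E2)
        ((fderiv ℝ (fun y => fderiv ℝ u y E2) xb).comp
          (↑A.symm : EuclideanSpace ℝ (Fin 2) →L[ℝ] EuclideanSpace ℝ (Fin 2))) qb :=
      hG2fd.comp qb hYder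
    have hneg := hcomp.neg
    have h3 : fderiv ℝ (fun q => fderiv ℝ (pLegendre u) q E2) qb
        = -((fderiv ℝ (fun y => fderiv ℝ u y E2) xb).comp
          (↑A.symm : EuclideanSpace ℝ (Fin 2) →L[ℝ] EuclideanSpace ℝ (Fin 2))) := by
      rw [hkey2.fderiv_eq]; exact hneg.fderiv
    show fderiv ℝ (fun q => fderiv ℝ (pLegendre u) q E2) qb E2 = b * c / a - d
    rw [h3]
    simp only [ContinuousLinearMap.neg_apply, ContinuousLinearMap.comp_apply,
      ContinuousLinearEquiv.coe_coe]
    rw [hAsymm2]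
    have h4 : fderiv ℝ (fun y => fderiv ℝ u y E2) xb (pt (-b / a) 1)
        = (-b / a) * c + 1 * d := by
      rw [pt_smul_add, map_add, map_smul, map_smul]
      simp only [smul_eq_mul, ← hE1, ← hE2, hfderivG1, hfderivG2]
      rfl
    rw [h4]
    field_simp
    ring
  -- conclusion
  rw [hfd1, hfd2, hd11, hd22, neg_neg, ← hxb]
  have hgrad : pt p (fderiv ℝ u xb E2) = gradient u xb := by
    rw [gradient_eq_pt, ← hE1, ← hE2, hcrit]
  rw [hgrad]
  have hMAxb := hMA xb hQxb
  rw [← ha', ← hb', ← hc', ← hd'] at hMAxb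
  have hGvne : g (gradient u xb) ≠ 0 := by
    intro h
    rw [h, div_zero] at hMAxb
    linarith
  rw [eq_div_iff hGvne] at hMAxb
  have hane : a ≠ 0 := ne_of_gt hapos
  have hfin : f xb * (1 / a) + g (gradient u xb) * (b * c / a - d)
      = (f xb - (a * d - c * b) * g (gradient u xb)) / a := by
    field_simp
    ring
  rw [hfin, hMAxb, sub_self, zero_div]
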